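/- Let 0 ≤ R₀ < R₁ and let G : ℂ → ℂ be holomorphic on the annulus A(R₀,R₁) = {z ∈ ℂ : R₀ < |z| < R₁}. Suppose that ∫₀^{2π} G(r·e^{iθ})² dθ = 0 for some r with R₀ < r < R₁. Then for every ρ with R₀ < ρ < R₁, 2·ρ²·∫₀^{2π} ‖G′(ρ·e^{iθ})‖² dθ ≥ ∫₀^{2π} ‖G(ρ·e^{iθ})‖² dθ, where G′ is the complex derivative of G. -/

import Mathlib

open Complex Real Set MeasureTheory intervalIntegral AddCircle
open scoped InnerProductSpace

local instance : Fact (0 < 2 * π) := ⟨Real.two_pi_pos⟩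

-- bridge: fourierCoeff of Periodic.lift equals fourierCoeffOn
lemma bridge (f : ℝ → ℂ) (hper : Function.Periodic f (2 * π)) (n : ℤ) :
    fourierCoeff (T := 2 * π) hper.lift n = fourierCoeffOn Real.two_pi_pos f n := by
  rw [fourierCoeff_eq_intervalIntegral _ n 0, fourierCoeffOn_eq_integral]
  simp only [zero_add, sub_zero, Function.Periodic.lift_coe, fourier_coe_apply]

lemma lift_continuous {f : ℝ → ℂ} (hc : Continuous f) (hper : Function.Periodic f (2 * π)) :
    Continuous hper.lift := by
  exact continuous_coinduced_dom.mpr hc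

noncomputable def cmap {f : ℝ → ℂ} (hc : Continuous f) (hper : Function.Periodic f (2 * π)) :
    C(AddCircle (2 * π), ℂ) := ⟨hper.lift, lift_continuous hc hper⟩

-- key inner product identity
lemma hasSum_coeff_mul {f g : ℝ → ℂ} (hfc : Continuous f) (hgc : Continuous g)
    (hfper : Function.Periodic f (2 * π)) (hgper : Function.Periodic g (2 * π)) :
    HasSum (fun n : ℤ => (starRingEnd ℂ) (fourierCoeffOn Real.two_pi_pos f n)
        * fourierCoeffOn Real.two_pi_pos g n)
      ((1 / (2 * π) : ℝ) • ∫ θ in (0:ℝ)..(2 * π), (starRingEnd ℂ) (f θ) * g θ) := by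
  set F := cmap hfc hfper
  set Gm := cmap hgc hgper
  set fL := ContinuousMap.toLp (E := ℂ) 2 haarAddCircle ℂ F
  set gL := ContinuousMap.toLp (E := ℂ) 2 haarAddCircle ℂ Gm
  have h1 := fourierBasis.hasSum_inner_mul_inner fL gL
  have hrepr : ∀ (x : Lp ℂ 2 (@haarAddCircle (2*π) _)) (i : ℤ),
      ⟪fourierBasis i, x⟫_ℂ = fourierCoeff x i := by
    intro x i
    rw [← fourierBasis_repr, fourierBasis.repr_apply_apply]
  have h2 : ∀ i : ℤ, ⟪fL, fourierBasis i⟫_ℂ * ⟪fourierBasis i, gL⟫_ℂ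
      = (starRingEnd ℂ) (fourierCoeffOn Real.two_pi_pos f i)
        * fourierCoeffOn Real.two_pi_pos g i := by
    intro i
    rw [← inner_conj_symm, hrepr, hrepr, fourierCoeff_toLp, fourierCoeff_toLp]
    congr 1
    · exact congrArg _ (bridge f hfper i)
    · exact bridge g hgper i
  have h3 : ⟪fL, gL⟫_ℂ = (1 / (2 * π) : ℝ) • ∫ θ in (0:ℝ)..(2 * π),
      (starRingEnd ℂ) (f θ) * g θ := by
    rw [MeasureTheory.L2.inner_def]
    have hae : ∀ᵐ t ∂(@haarAddCircle (2*π) _), ⟪fL t, gL t⟫_ℂ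
        = (starRingEnd ℂ) (F t) * Gm t := by
      filter_upwards [ContinuousMap.coeFn_toLp (p := 2) (μ := @haarAddCircle (2*π) _) (𝕜 := ℂ) F,
        ContinuousMap.coeFn_toLp (p := 2) (μ := @haarAddCircle (2*π) _) (𝕜 := ℂ) Gm] with t h1 h2
      rw [h1, h2, RCLike.inner_apply]; ring
    rw [integral_congr_ae hae]
    have hvol : (∫ t, (starRingEnd ℂ) (F t) * Gm t)
        = (2 * π : ℝ) • ∫ t, (starRingEnd ℂ) (F t) * Gm t ∂(@haarAddCircle (2*π) _) := by
      rw [@volume_eq_smul_haarAddCircle (2*π) _, MeasureTheory.integral_smul_measure,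
        ENNReal.toReal_ofReal Real.two_pi_pos.le]
    have hsm : ((1 / (2 * π) : ℝ) • ((2 * π : ℝ) • ∫ t, (starRingEnd ℂ) (F t) * Gm t
        ∂(@haarAddCircle (2*π) _)))
        = ∫ t, (starRingEnd ℂ) (F t) * Gm t ∂(@haarAddCircle (2*π) _) := by
      rw [smul_smul]
      rw [show (1 / (2 * π) : ℝ) * (2 * π) = 1 by
        field_simp]
      rw [one_smul]
    have hiv : (∫ θ in (0:ℝ)..(0 + 2 * π), (starRingEnd ℂ) (f θ) * g θ)
        = ∫ t, (starRingEnd ℂ) (F t) * Gm t := by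
      rw [← AddCircle.intervalIntegral_preimage (2*π) 0 (fun t => (starRingEnd ℂ) (F t) * Gm t)]
      refine intervalIntegral.integral_congr fun θ _ => ?_
      simp [F, Gm, cmap]
    rw [show (0:ℝ) + 2*π = 2*π by ring] at hiv
    rw [hiv, hvol, hsm]
  have h4 := h1.congr_fun (fun i => (h2 i).symm)
  rwa [h3] at h4

lemma my_intervalIntegral_conj {f : ℝ → ℂ} {a b : ℝ} :
    (∫ x in a..b, (starRingEnd ℂ) (f x)) = (starRingEnd ℂ) (∫ x in a..b, f x) := by
  simp only [intervalIntegral]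
  rw [map_sub, ← integral_conj, ← integral_conj]

lemma coeff_conj (g : ℝ → ℂ) (n : ℤ) :
    fourierCoeffOn Real.two_pi_pos (fun x => (starRingEnd ℂ) (g x)) n
      = (starRingEnd ℂ) (fourierCoeffOn Real.two_pi_pos g (-n)) := by
  rw [fourierCoeffOn_eq_integral, fourierCoeffOn_eq_integral]
  rw [real_smul, real_smul, map_mul, conj_ofReal, ← my_intervalIntegral_conj]
  congr 1
  refine intervalIntegral.integral_congr fun θ _ => ?_
  simp only [smul_eq_mul, map_mul, neg_neg, ← fourier_neg]

lemma coeff_deriv (u u' : ℝ → ℂ) (hu : ∀ θ : ℝ, HasDerivAt u (u' θ) θ)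
    (hu'c : Continuous u') (hper : Function.Periodic u (2 * π)) (n : ℤ) :
    fourierCoeffOn Real.two_pi_pos u' n = I * n * fourierCoeffOn Real.two_pi_pos u n := by
  have hb : u (2 * π) = u 0 := by simpa using hper 0
  rcases eq_or_ne n 0 with rfl | hn
  · have hint : ∫ x in (0:ℝ)..(2 * π), u' x = u (2 * π) - u 0 :=
      intervalIntegral.integral_eq_sub_of_hasDerivAt (fun x _ => hu x)
        (hu'c.intervalIntegrable _ _)
    rw [fourierCoeffOn_eq_integral]
    simp [hint, hb]
  · have h := fourierCoeffOn_of_hasDerivAt Real.two_pi_pos hn (fun x _ => hu x)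
      (hu'c.intervalIntegrable _ _)
    rw [hb, sub_self, mul_zero, zero_sub] at h
    have hπ : (π : ℂ) ≠ 0 := ofReal_ne_zero.mpr Real.pi_ne_zero
    have hn' : (n : ℂ) ≠ 0 := Int.cast_ne_zero.mpr hn
    field_simp at h
    -- h should now be linear relation
    apply mul_left_cancel₀ (show (2*(π:ℂ)) ≠ 0 by simp [hπ])
    push_cast at h; linear_combination -h

lemma wirtinger_aux (u u' : ℝ → ℂ) (hu : ∀ θ : ℝ, HasDerivAt u (u' θ) θ)
    (hu'c : Continuous u') (hper : Function.Periodic u (2 * π))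
    (hzero : ∫ θ in (0:ℝ)..(2 * π), (u θ) ^ 2 = 0) :
    ∫ θ in (0:ℝ)..(2 * π), ‖u θ‖ ^ 2 ≤ 2 * ∫ θ in (0:ℝ)..(2 * π), ‖u' θ‖ ^ 2 := by
  have huc : Continuous u := by
    rw [continuous_iff_continuousAt]; exact fun θ => (hu θ).continuousAt
  have hper' : Function.Periodic u' (2 * π) := by
    intro θ
    have h1 : HasDerivAt (fun t => u (t + 2 * π)) (u' (θ + 2 * π)) θ :=
      HasDerivAt.comp_add_const θ (2 * π) (hu (θ + 2 * π))
    have h2 : (fun t => u (t + 2 * π)) = u := funext fun t => hper t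
    rw [h2] at h1
    exact h1.unique (hu θ)
  set c : ℤ → ℂ := fun n => fourierCoeffOn Real.two_pi_pos u n with hc
  have hterm : ∀ z : ℂ, (starRingEnd ℂ) z * z = ((‖z‖ ^ 2 : ℝ) : ℂ) := by
    intro z
    rw [mul_comm, Complex.mul_conj, Complex.normSq_eq_norm_sq]
  -- Parseval for u
  have HA : HasSum (fun n => ‖c n‖ ^ 2) ((1 / (2 * π)) * ∫ θ in (0:ℝ)..(2 * π), ‖u θ‖ ^ 2) := by
    have h0 := hasSum_coeff_mul huc huc hper hper
    have h1 : (fun n : ℤ => (starRingEnd ℂ) (c n) * c n) = fun n => ((‖c n‖ ^ 2 : ℝ) : ℂ) :=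
      funext fun n => hterm (c n)
    rw [h1] at h0
    have h2 : (∫ θ in (0:ℝ)..(2 * π), (starRingEnd ℂ) (u θ) * u θ)
        = ((∫ θ in (0:ℝ)..(2 * π), ‖u θ‖ ^ 2 : ℝ) : ℂ) := by
      rw [← intervalIntegral.integral_ofReal]
      exact intervalIntegral.integral_congr fun θ _ => hterm (u θ)
    rw [h2] at h0
    have h3 := h0.mapL Complex.reCLM
    simpa [Complex.smul_re, ← Complex.ofReal_pow] using h3
  -- Parseval for u'
  have HB : HasSum (fun n : ℤ => (n : ℝ) ^ 2 * ‖c n‖ ^ 2)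
      ((1 / (2 * π)) * ∫ θ in (0:ℝ)..(2 * π), ‖u' θ‖ ^ 2) := by
    have h0 := hasSum_coeff_mul hu'c hu'c hper' hper'
    have h1 : (fun n : ℤ => (starRingEnd ℂ) (fourierCoeffOn Real.two_pi_pos u' n)
        * fourierCoeffOn Real.two_pi_pos u' n)
        = fun n : ℤ => (((n : ℝ) ^ 2 * ‖c n‖ ^ 2 : ℝ) : ℂ) := by
      funext n
      rw [hterm, coeff_deriv u u' hu hu'c hper]
      norm_cast
      simp [hc, norm_mul, Complex.norm_I, Complex.norm_intCast, mul_pow,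
        _root_.sq_abs]
    rw [h1] at h0
    have h2 : (∫ θ in (0:ℝ)..(2 * π), (starRingEnd ℂ) (u' θ) * u' θ)
        = ((∫ θ in (0:ℝ)..(2 * π), ‖u' θ‖ ^ 2 : ℝ) : ℂ) := by
      rw [← intervalIntegral.integral_ofReal]
      exact intervalIntegral.integral_congr fun θ _ => hterm (u' θ)
    rw [h2] at h0
    have h3 := h0.mapL Complex.reCLM
    simpa [Complex.smul_re, ← Complex.ofReal_pow, ← Complex.ofReal_mul] using h3
  -- the constraint
  have HQ : HasSum (fun n : ℤ => c (-n) * c n) 0 := by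
    have hconjc : Continuous fun x => (starRingEnd ℂ) (u x) := Complex.continuous_conj.comp huc
    have hconjper : Function.Periodic (fun x => (starRingEnd ℂ) (u x)) (2 * π) :=
      fun θ => by simp [hper θ]
    have h0 := hasSum_coeff_mul hconjc huc hconjper hper
    have h1 : (fun n : ℤ => (starRingEnd ℂ)
          (fourierCoeffOn Real.two_pi_pos (fun x => (starRingEnd ℂ) (u x)) n)
        * fourierCoeffOn Real.two_pi_pos u n) = fun n : ℤ => c (-n) * c n := by
      funext n
      rw [coeff_conj]
      simp [hc]
    rw [h1] at h0
    have h2 : (∫ θ in (0:ℝ)..(2 * π), (starRingEnd ℂ) ((starRingEnd ℂ) (u θ)) * u θ)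
        = ∫ θ in (0:ℝ)..(2 * π), (u θ) ^ 2 := by
      refine intervalIntegral.integral_congr fun θ _ => ?_
      rw [Complex.conj_conj]; ring
    rw [h2, hzero, smul_zero] at h0
    exact h0
  -- arithmetic
  set a : ℤ → ℝ := fun n => ‖c n‖ ^ 2 with ha
  set A := (1 / (2 * π)) * ∫ θ in (0:ℝ)..(2 * π), ‖u θ‖ ^ 2 with hA
  set B := (1 / (2 * π)) * ∫ θ in (0:ℝ)..(2 * π), ‖u' θ‖ ^ 2 with hB
  have Sa : Summable a := HA.summable
  have Sa_neg : Summable fun n => a (-n) := by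
    have := (Equiv.neg ℤ).summable_iff.mpr Sa
    exact this
  have Se : Summable fun n : ℤ => if n = 0 then 0 else a n := by
    refine Summable.of_nonneg_of_le (fun n => ?_) (fun n => ?_) Sa
    · split <;> positivity
    · split
      · positivity
      · exact le_rfl
  have Sb : Summable fun n : ℤ => (n : ℝ) ^ 2 * ‖c n‖ ^ 2 := HB.summable
  have Se_neg : Summable fun n : ℤ => if n = 0 then 0 else a (-n) := by
    refine Summable.of_nonneg_of_le (fun n => ?_) (fun n => ?_) Sa_neg
    · split <;> positivity
    · split
      · positivity
      · exact le_rfl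
  have Shalf : Summable fun n : ℤ =>
      ((if n = 0 then 0 else a (-n)) + (if n = 0 then 0 else a n)) / 2 :=
    (Se_neg.add Se).div_const 2
  set m : ℤ → ℝ := fun n => if n = 0 then 0 else ‖c (-n)‖ * ‖c n‖ with hm
  have hm_le : ∀ n : ℤ, m n ≤ ((if n = 0 then 0 else a (-n)) + (if n = 0 then 0 else a n)) / 2 := by
    intro n
    simp only [hm, ha]
    split
    · norm_num
    · nlinarith [sq_nonneg (‖c (-n)‖ - ‖c n‖), norm_nonneg (c (-n)), norm_nonneg (c n)]
  have Sm : Summable m := by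
    refine Summable.of_nonneg_of_le (fun n => ?_) hm_le Shalf
    simp only [hm]; split
    · exact le_rfl
    · positivity
  have Sq : Summable fun n : ℤ => c (-n) * c n := HQ.summable
  have hq0 : c 0 * c 0 = -∑' n : ℤ, (if n = 0 then (0:ℂ) else c (-n) * c n) := by
    have h := Sq.tsum_eq_add_tsum_ite 0
    rw [HQ.tsum_eq] at h
    simp only [neg_zero] at h
    exact eq_neg_of_add_eq_zero_left h.symm
  have hnormite : (fun n : ℤ => ‖(if n = 0 then (0:ℂ) else c (-n) * c n)‖) = m := by
    funext n
    simp only [hm]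
    split <;> simp [norm_mul]
  have bound1 : a 0 ≤ ∑' n, m n := by
    have h1 : a 0 = ‖c 0 * c 0‖ := by simp [ha, norm_mul, sq]
    rw [h1, hq0, norm_neg]
    have h2 := norm_tsum_le_tsum_norm (f := fun n : ℤ => if n = 0 then (0:ℂ) else c (-n) * c n)
      (by rw [hnormite]; exact Sm)
    rwa [hnormite] at h2
  set E := ∑' n : ℤ, (if n = 0 then (0:ℝ) else a n) with hE
  have hnegE : ∑' n : ℤ, (if n = 0 then (0:ℝ) else a (-n)) = E := by
    have h := (Equiv.neg ℤ).tsum_eq (f := fun n : ℤ => if n = 0 then (0:ℝ) else a n)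
    rw [hE, ← h]
    apply tsum_congr
    intro n
    simp [neg_eq_zero]
  have bound2 : ∑' n, m n ≤ E := by
    have h := Summable.tsum_le_tsum hm_le Sm Shalf
    calc ∑' n, m n ≤ _ := h
      _ = ((∑' n : ℤ, (if n = 0 then (0:ℝ) else a (-n))) + E) / 2 := by
          rw [tsum_div_const, Summable.tsum_add Se_neg Se]
      _ = E := by rw [hnegE]; ring
  have bound3 : E ≤ B := by
    rw [← HB.tsum_eq]
    refine Summable.tsum_le_tsum (fun n => ?_) Se Sb
    split
    · positivity
    · rename_i hn
      have h1 : (1:ℝ) ≤ (n:ℝ) ^ 2 := by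
        have : (1:ℤ) ≤ n ^ 2 := by
          rcases lt_or_gt_of_ne hn with h | h <;> nlinarith
        exact_mod_cast this
      have h2 := mul_le_mul_of_nonneg_right h1 (sq_nonneg ‖c n‖)
      simpa [ha] using h2
  have hA_split : A = a 0 + E := by
    rw [← HA.tsum_eq, Sa.tsum_eq_add_tsum_ite 0, hE]
  have hABfin : A ≤ 2 * B := by
    have ha0E : a 0 ≤ E := le_trans bound1 bound2
    rw [hA_split]
    linarith
  have h2π : (0:ℝ) < 2 * π := Real.two_pi_pos
  have hXA : (∫ θ in (0:ℝ)..(2 * π), ‖u θ‖ ^ 2) = (2 * π) * A := by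
    rw [hA]; field_simp
  have hYB : (2 * π) * (2 * B) = 2 * ∫ θ in (0:ℝ)..(2 * π), ‖u' θ‖ ^ 2 := by
    rw [hB]; field_simp; try ring
  rw [hXA, ← hYB]
  exact mul_le_mul_of_nonneg_left hABfin h2π.le


/-- If the circle integral of `G²` vanishes on some circle in the annulus, then
on every circle `2ρ² ∫₀^{2π} ‖G′‖² dθ ≥ ∫₀^{2π} ‖G‖² dθ`. -/
theorem stmt_11 (R₀ R₁ : ℝ) (hR₀ : 0 ≤ R₀) (hR : R₀ < R₁) (G : ℂ → ℂ)
    (hG : DifferentiableOn ℂ G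
      {z : ℂ | R₀ < ‖z‖ ∧ ‖z‖ < R₁})
    (r : ℝ) (hr₀ : R₀ < r) (hr₁ : r < R₁)
    (hint : ∫ θ in (0:ℝ)..(2 * π),
        (G ((r : ℂ) * Complex.exp (θ * Complex.I))) ^ 2 = 0) :
    ∀ ρ : ℝ, R₀ < ρ → ρ < R₁ →
      2 * ρ ^ 2 * ∫ θ in (0:ℝ)..(2 * π),
          ‖deriv G ((ρ : ℂ) * Complex.exp (θ * Complex.I))‖ ^ 2
        ≥ ∫ θ in (0:ℝ)..(2 * π),
            ‖G ((ρ : ℂ) * Complex.exp (θ * Complex.I))‖ ^ 2 := by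
  intro ρ hρ₀ hρ₁
  set U : Set ℂ := {z : ℂ | R₀ < ‖z‖ ∧ ‖z‖ < R₁} with hUdef
  have hUopen : IsOpen U := by
    have h : U = (fun z : ℂ => ‖z‖) ⁻¹' (Ioo R₀ R₁) := rfl
    rw [h]
    exact isOpen_Ioo.preimage continuous_norm
  have hρpos : 0 < ρ := lt_of_le_of_lt hR₀ hρ₀
  have habs : ∀ (s θ : ℝ), 0 < s → ‖(s:ℂ) * Complex.exp (θ * I)‖ = s := by
    intro s θ hs
    rw [norm_mul, Complex.norm_exp_ofReal_mul_I, Complex.norm_real, Real.norm_eq_abs, abs_of_pos hs, mul_one]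
  have hmem : ∀ (s θ : ℝ), R₀ < s → s < R₁ → (s:ℂ) * Complex.exp (θ * I) ∈ U := by
    intro s θ h0 h1
    refine ⟨?_, ?_⟩ <;> rw [habs s θ (hR₀.trans_lt h0)] <;> assumption
  have hGanalytic : AnalyticOnNhd ℂ G U := hG.analyticOnNhd hUopen
  have hGdiffAt : ∀ z ∈ U, DifferentiableAt ℂ G z := fun z hz =>
    hG.differentiableAt (hUopen.mem_nhds hz)
  -- circle integral of G²/z
  have hcirc : ∀ s : ℝ, 0 < s →
      (∮ z in C(0, s), (G z)^2 / z)
        = I * ∫ θ in (0:ℝ)..(2*π), (G ((s:ℂ) * Complex.exp (θ * I)))^2 := by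
    intro s hs
    rw [circleIntegral, ← intervalIntegral.integral_const_mul]
    refine intervalIntegral.integral_congr fun θ _ => ?_
    have hz : circleMap 0 s θ ≠ 0 := circleMap_ne_center (ne_of_gt hs)
    have hcm : circleMap 0 s θ = (s:ℂ) * Complex.exp (θ * I) := by simp [circleMap]
    have hexp : Complex.exp ((θ:ℂ) * I) ≠ 0 := Complex.exp_ne_zero _
    have hs' : (s:ℂ) ≠ 0 := by exact_mod_cast hs.ne'
    rw [deriv_circleMap, hcm, smul_eq_mul]
    field_simp
  -- transfer the vanishing constraint between radii
  have htrans : ∀ p q : ℝ, R₀ < p → p ≤ q → q < R₁ →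
      (∫ θ in (0:ℝ)..(2*π), (G ((q:ℂ) * Complex.exp (θ * I)))^2)
        = ∫ θ in (0:ℝ)..(2*π), (G ((p:ℂ) * Complex.exp (θ * I)))^2 := by
    intro p q hp hpq hq
    have hppos : 0 < p := hR₀.trans_lt hp
    have hsub : Metric.closedBall (0:ℂ) q \ Metric.ball 0 p ⊆ U := by
      intro z hz
      obtain ⟨hz1, hz2⟩ := hz
      rw [mem_closedBall_zero_iff] at hz1
      rw [mem_ball_zero_iff, not_lt] at hz2
      exact ⟨lt_of_lt_of_le hp hz2, lt_of_le_of_lt hz1 hq⟩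
    have hne : ∀ z ∈ Metric.closedBall (0:ℂ) q \ Metric.ball 0 p, z ≠ 0 := by
      intro z hz hz0
      have hzU := hsub hz
      rw [hz0] at hzU
      have h1 := hzU.1
      simp only [norm_zero] at h1
      linarith
    have hcont : ContinuousOn (fun z => (G z)^2 / z)
        (Metric.closedBall (0:ℂ) q \ Metric.ball 0 p) := by
      exact ContinuousOn.div ((hG.continuousOn.mono hsub).pow 2) continuousOn_id hne
    have hmono : (Metric.ball (0:ℂ) q \ Metric.closedBall 0 p)
        ⊆ Metric.closedBall (0:ℂ) q \ Metric.ball 0 p := by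
      intro z hz
      exact ⟨Metric.ball_subset_closedBall hz.1, fun h => hz.2 (Metric.ball_subset_closedBall h)⟩
    have hdiff : ∀ z ∈ (Metric.ball (0:ℂ) q \ Metric.closedBall 0 p) \ (∅ : Set ℂ),
        DifferentiableAt ℂ (fun z => (G z)^2 / z) z := by
      intro z hz
      have hzm := hmono hz.1
      exact ((hGdiffAt z (hsub hzm)).pow 2).div differentiableAt_id (hne z hzm)
    have heq := circleIntegral_eq_of_differentiable_on_annulus_off_countable hppos hpq
      Set.countable_empty hcont hdiff
    rw [hcirc q (lt_of_lt_of_le hppos hpq), hcirc p hppos] at heq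
    exact mul_left_cancel₀ Complex.I_ne_zero heq
  have hconstraint : ∫ θ in (0:ℝ)..(2*π), (G ((ρ:ℂ) * Complex.exp (θ * I)))^2 = 0 := by
    rcases le_total ρ r with h | h
    · rw [← htrans ρ r hρ₀ h hr₁]; exact hint
    · rw [htrans r ρ hr₀ h hρ₁]; exact hint
  -- set up the boundary function and its derivative
  set u : ℝ → ℂ := fun θ => G ((ρ:ℂ) * Complex.exp (θ * I)) with hu
  set u' : ℝ → ℂ := fun θ =>
    deriv G ((ρ:ℂ) * Complex.exp (θ * I)) * ((ρ:ℂ) * Complex.exp (θ * I) * I) with hu'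
  have hzder : ∀ θ : ℝ, HasDerivAt (fun t : ℝ => (ρ:ℂ) * Complex.exp (t * I))
      ((ρ:ℂ) * Complex.exp (θ * I) * I) θ := by
    intro θ
    have h1 : HasDerivAt (fun t : ℝ => (t:ℂ) * I) I θ := by
      simpa using (Complex.ofRealCLM.hasDerivAt (x := θ)).mul_const I
    have h2 := h1.cexp
    have h3 := h2.const_mul ((ρ:ℂ))
    simpa [mul_assoc] using h3
  have huder : ∀ θ : ℝ, HasDerivAt u (u' θ) θ := by
    intro θ
    have hz := hzder θ
    have hGz := (hGdiffAt _ (hmem ρ θ hρ₀ hρ₁)).hasDerivAt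
    simpa [hu, hu', Function.comp_def] using hGz.comp θ hz
  have hzc : Continuous (fun t : ℝ => (ρ:ℂ) * Complex.exp (t * I)) :=
    continuous_const.mul (Complex.continuous_exp.comp
      (Complex.continuous_ofReal.mul continuous_const))
  have hu'cont : Continuous u' := by
    rw [continuous_iff_continuousAt]
    intro θ
    have hd : ContinuousAt (deriv G) ((ρ:ℂ) * Complex.exp (θ * I)) :=
      ((hGanalytic.deriv) _ (hmem ρ θ hρ₀ hρ₁)).continuousAt
    rw [hu']
    have h1 : ContinuousAt (fun t : ℝ => deriv G ((ρ:ℂ) * Complex.exp (t * I))) θ :=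
      ContinuousAt.comp (g := deriv G) hd hzc.continuousAt
    exact h1.mul ((hzc.mul continuous_const).continuousAt)
  have hperu : Function.Periodic u (2 * π) := by
    intro θ
    simp only [hu]
    congr 2
    have h : ((θ + 2*π : ℝ) : ℂ) * I = θ * I + 2 * π * I := by push_cast; ring
    rw [h, Complex.exp_add, Complex.exp_two_pi_mul_I, mul_one]
  have hmain := wirtinger_aux u u' huder hu'cont hperu hconstraint
  have hnorm : ∀ θ : ℝ, ‖u' θ‖^2 = ρ^2 * ‖deriv G ((ρ:ℂ) * Complex.exp (θ * I))‖^2 := by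
    intro θ
    simp only [hu', norm_mul, Complex.norm_I,
      Complex.norm_exp_ofReal_mul_I, Complex.norm_real, Real.norm_eq_abs, abs_of_pos hρpos]
    ring
  have hint' : (∫ θ in (0:ℝ)..(2*π), ‖u' θ‖^2)
      = ρ^2 * ∫ θ in (0:ℝ)..(2*π), ‖deriv G ((ρ:ℂ) * Complex.exp (θ * I))‖^2 := by
    rw [← intervalIntegral.integral_const_mul]
    exact intervalIntegral.integral_congr fun θ _ => hnorm θ
  rw [hint'] at hmain
  rw [ge_iff_le]
  calc (∫ θ in (0:ℝ)..(2 * π), ‖G ((ρ:ℂ) * Complex.exp (θ * I))‖^2)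
      = ∫ θ in (0:ℝ)..(2 * π), ‖u θ‖^2 := by simp only [hu]
    _ ≤ 2 * (ρ^2 * ∫ θ in (0:ℝ)..(2*π), ‖deriv G ((ρ:ℂ) * Complex.exp (θ * I))‖^2) := hmain
    _ = 2 * ρ^2 * ∫ θ in (0:ℝ)..(2*π), ‖deriv G ((ρ:ℂ) * Complex.exp (θ * I))‖^2 := by ring
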